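/- For all σ, β ∈ (0,1] there exist a function φ : ℝ → ℝ that is σ-Hölder (with some finite constant) and a function g : [0,1] → ℝ that is β-Hölder (with some finite constant) such that the function f defined on [0,1]² by f(x,y) = φ(y − g(x)) satisfies: for all a, b ∈ (0,1], f belongs to the anisotropic Hölder space 𝓗^{(a,b)}([0,1]²) if and only if a ≤ βσ and b ≤ σ. -/

import Mathlib

open Real NNReal



/-- A real function `u` is `τ`-Hölder with constant `L` on a set `s`. -/
def IsHolderOn (τ L : ℝ) (u : ℝ → ℝ) (s : Set ℝ) : Prop :=
  ∀ t ∈ s, ∀ t' ∈ s, |u t - u t'| ≤ L * |t - t'| ^ τ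

/-- `f` belongs to the anisotropic Hölder space `𝓗^{(a,b)}([0,1]²)`. -/
def MemAnisoHolder (a b : ℝ) (f : ℝ → ℝ → ℝ) : Prop :=
  ∃ L : ℝ, 0 ≤ L ∧
    (∀ y ∈ Set.Icc (0 : ℝ) 1, IsHolderOn a L (fun x => f x y) (Set.Icc 0 1)) ∧
    (∀ x ∈ Set.Icc (0 : ℝ) 1, IsHolderOn b L (fun y => f x y) (Set.Icc 0 1))



lemma subadd' {p : ℝ} (hp : 0 < p) (hp1 : p ≤ 1) {u v : ℝ} (hu : 0 ≤ u) (hv : 0 ≤ v) :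
    (u + v) ^ p ≤ u ^ p + v ^ p := by
  have := NNReal.rpow_add_le_add_rpow ⟨u, hu⟩ ⟨v, hv⟩ hp.le hp1
  have h2 := NNReal.coe_le_coe.2 this
  push_cast at h2
  exact h2

lemma rpow_abs_sub' {p : ℝ} (hp : 0 < p) (hp1 : p ≤ 1) {u v : ℝ} (hu : 0 ≤ u) (hv : 0 ≤ v) :
    |u ^ p - v ^ p| ≤ |u - v| ^ p := by
  wlog h : v ≤ u generalizing u v
  · rw [abs_sub_comm, abs_sub_comm u v]; exact this hv hu (le_of_not_ge h)
  have key : u ^ p ≤ (u - v) ^ p + v ^ p := by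
    have := subadd' hp hp1 (by linarith : (0:ℝ) ≤ u - v) hv
    rwa [sub_add_cancel] at this
  rw [abs_of_nonneg (sub_nonneg.2 (Real.rpow_le_rpow hv h hp.le)),
    abs_of_nonneg (sub_nonneg.2 h)]
  linarith

/-- If `y^p ≤ L * y^q` on `[0,1]` then `q ≤ p`. -/
lemma exp_le_of_rpow_le {p q L : ℝ} (hp : 0 < p) (hL : 0 ≤ L)
    (h : ∀ y ∈ Set.Icc (0:ℝ) 1, y ^ p ≤ L * y ^ q) : q ≤ p := by
  by_contra hq
  push_neg at hq
  set ε := q - p with hε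
  have hεpos : 0 < ε := by simp [hε]; linarith
  have hL1 : (0:ℝ) < L + 1 := by linarith
  set y := ((L + 1)⁻¹) ^ ε⁻¹ with hy
  have hy0 : 0 < y := Real.rpow_pos_of_pos (by positivity) _
  have hy1 : y ≤ 1 := Real.rpow_le_one (by positivity)
    (by rw [inv_le_one_iff₀]; right; linarith) (by positivity)
  have hyε : y ^ ε = (L + 1)⁻¹ := by
    rw [hy, ← Real.rpow_mul (by positivity), inv_mul_cancel₀ hεpos.ne', Real.rpow_one]
  have h1 := h y ⟨hy0.le, hy1⟩
  have hyq : y ^ q = y ^ p * y ^ ε := by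
    rw [← Real.rpow_add hy0, hε]; ring_nf
  rw [hyq, hyε] at h1
  have hyp : 0 < y ^ p := Real.rpow_pos_of_pos hy0 _
  have : (1:ℝ) ≤ L * (L + 1)⁻¹ := by
    have := mul_le_mul_of_nonneg_right h1 (le_of_lt (inv_pos.2 hyp))
    rw [mul_inv_cancel₀ hyp.ne'] at this
    calc (1:ℝ) ≤ L * (y ^ p * (L + 1)⁻¹) * (y ^ p)⁻¹ := this
      _ = L * (L + 1)⁻¹ := by field_simp
  have h3 : L + 1 ≤ L := by
    have := mul_le_mul_of_nonneg_right this hL1.le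
    rwa [one_mul, mul_assoc, inv_mul_cancel₀ hL1.ne', mul_one] at this
  linarith

theorem stmt_17 (σ β : ℝ) (hσ : σ ∈ Set.Ioc (0 : ℝ) 1) (hβ : β ∈ Set.Ioc (0 : ℝ) 1) :
    ∃ φ g : ℝ → ℝ,
      (∃ Lφ : ℝ, 0 ≤ Lφ ∧ ∀ u v : ℝ, |φ u - φ v| ≤ Lφ * |u - v| ^ σ) ∧
      (∃ Lg : ℝ, 0 ≤ Lg ∧ IsHolderOn β Lg g (Set.Icc 0 1)) ∧
      (∀ a ∈ Set.Ioc (0 : ℝ) 1, ∀ b ∈ Set.Ioc (0 : ℝ) 1,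
        (MemAnisoHolder a b (fun x y => φ (y - g x)) ↔ (a ≤ β * σ ∧ b ≤ σ))) := by
  obtain ⟨hσ0, hσ1⟩ := hσ
  obtain ⟨hβ0, hβ1⟩ := hβ
  refine ⟨fun t => |t| ^ σ, fun x => x ^ β, ⟨1, zero_le_one, fun u v => ?_⟩,
    ⟨1, zero_le_one, fun t ht t' ht' => ?_⟩, fun a ha b hb => ?_⟩
  -- φ is σ-Hölder
  · rw [one_mul]
    calc |(|u|) ^ σ - (|v|) ^ σ| ≤ (|(|u|) - (|v|)|) ^ σ :=
          rpow_abs_sub' hσ0 hσ1 (abs_nonneg u) (abs_nonneg v)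
      _ ≤ |u - v| ^ σ := Real.rpow_le_rpow (abs_nonneg _) (abs_abs_sub_abs_le_abs_sub u v) hσ0.le
  -- g is β-Hölder on [0,1]
  · rw [one_mul]
    exact rpow_abs_sub' hβ0 hβ1 ht.1 ht'.1
  constructor
  · -- forward direction
    rintro ⟨L, hL0, hX, hY⟩
    constructor
    · -- a ≤ β * σ
      refine exp_le_of_rpow_le (by positivity) hL0 fun x hx => ?_
      have := hX 0 ⟨le_refl 0, zero_le_one⟩ x hx 0 ⟨le_refl 0, zero_le_one⟩
      simp only at this
      rw [Real.zero_rpow hβ0.ne', zero_sub, abs_neg, sub_zero, sub_zero,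
        abs_of_nonneg (Real.rpow_nonneg hx.1 β), abs_zero, Real.zero_rpow hσ0.ne', sub_zero,
        abs_of_nonneg (Real.rpow_nonneg (Real.rpow_nonneg hx.1 β) σ),
        ← Real.rpow_mul hx.1, abs_of_nonneg hx.1] at this
      exact this
    · -- b ≤ σ
      refine exp_le_of_rpow_le hσ0 hL0 fun y hy => ?_
      have := hY 0 ⟨le_refl 0, zero_le_one⟩ y hy 0 ⟨le_refl 0, zero_le_one⟩
      simp only at this
      rw [Real.zero_rpow hβ0.ne', sub_zero, sub_zero,
        abs_of_nonneg hy.1, abs_zero, Real.zero_rpow hσ0.ne', sub_zero,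
        abs_of_nonneg (Real.rpow_nonneg hy.1 σ)] at this
      exact this
  · -- reverse direction
    rintro ⟨ha', hb'⟩
    refine ⟨1, zero_le_one, fun y hy x hx x' hx' => ?_, fun x hx y hy y' hy' => ?_⟩
    · -- Hölder in x with exponent a
      simp only [one_mul]
      rcases eq_or_ne x x' with rfl | hne
      · simp [Real.rpow_nonneg (abs_nonneg ((0:ℝ))) a]
        positivity
      have hd0 : 0 < |x - x'| := abs_pos.2 (sub_ne_zero.2 hne)
      have hd1 : |x - x'| ≤ 1 := by
        rw [abs_sub_le_iff]; constructor <;> [linarith [hx.1, hx.2, hx'.1, hx'.2];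
          linarith [hx.1, hx.2, hx'.1, hx'.2]]
      calc |(|y - x ^ β|) ^ σ - (|y - x' ^ β|) ^ σ|
          ≤ (|(|y - x ^ β|) - (|y - x' ^ β|)|) ^ σ :=
            rpow_abs_sub' hσ0 hσ1 (abs_nonneg _) (abs_nonneg _)
        _ ≤ |(y - x ^ β) - (y - x' ^ β)| ^ σ :=
            Real.rpow_le_rpow (abs_nonneg _) (abs_abs_sub_abs_le_abs_sub _ _) hσ0.le
        _ = |x' ^ β - x ^ β| ^ σ := by ring_nf
        _ ≤ (|x' - x| ^ β) ^ σ :=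
            Real.rpow_le_rpow (abs_nonneg _) (rpow_abs_sub' hβ0 hβ1 hx'.1 hx.1) hσ0.le
        _ = |x - x'| ^ (β * σ) := by
            rw [← Real.rpow_mul (abs_nonneg _), abs_sub_comm]
        _ ≤ |x - x'| ^ a := Real.rpow_le_rpow_of_exponent_ge hd0 hd1 ha'
    · -- Hölder in y with exponent b
      simp only [one_mul]
      rcases eq_or_ne y y' with rfl | hne
      · simp
        positivity
      have hd0 : 0 < |y - y'| := abs_pos.2 (sub_ne_zero.2 hne)
      have hd1 : |y - y'| ≤ 1 := by
        rw [abs_sub_le_iff]; constructor <;> linarith [hy.1, hy.2, hy'.1, hy'.2]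
      calc |(|y - x ^ β|) ^ σ - (|y' - x ^ β|) ^ σ|
          ≤ (|(|y - x ^ β|) - (|y' - x ^ β|)|) ^ σ :=
            rpow_abs_sub' hσ0 hσ1 (abs_nonneg _) (abs_nonneg _)
        _ ≤ |(y - x ^ β) - (y' - x ^ β)| ^ σ :=
            Real.rpow_le_rpow (abs_nonneg _) (abs_abs_sub_abs_le_abs_sub _ _) hσ0.le
        _ = |y - y'| ^ σ := by ring_nf
        _ ≤ |y - y'| ^ b := Real.rpow_le_rpow_of_exponent_ge hd0 hd1 hb'
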